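/- Suppose Z ⊊ Y ⊊ X (nonempty, strict inclusions). Then there exists α ∈ T(X,Y,Z) with α(X \ Y) ∩ (Y \ Z) ≠ ∅, and for every idempotent e ∈ T(X,Y,Z), e(X) ∩ (Y \ Z) = ∅. In particular, no idempotent e satisfies e(X) = α(X). -/
import Mathlib


/-- If Z ⊊ Y ⊊ X there is α ∈ T(X,Y,Z) with α(X \ Y) ∩ (Y \ Z) ≠ ∅, while
every idempotent e ∈ T(X,Y,Z) has e(X) ∩ (Y \ Z) = ∅; in particular no
idempotent has the same range as α. -/
theorem stmt_13 {X : Type*} (Y Z : Set X) (hZY : Z ⊂ Y) (hYX : Y ⊂ Set.univ)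
    (hZ : Z.Nonempty) :
    ∃ α : X → X, α '' Y ⊆ Z ∧ (α '' Yᶜ ∩ (Y \ Z)).Nonempty ∧
      ∀ e : X → X, e '' Y ⊆ Z → e ∘ e = e →
        Set.range e ∩ (Y \ Z) = ∅ ∧ Set.range e ≠ Set.range α := by
  obtain ⟨z₀, hz₀⟩ := hZ
  obtain ⟨y₀, hy₀Y, hy₀Z⟩ := Set.exists_of_ssubset hZY
  obtain ⟨x₀, _, hx₀⟩ := Set.exists_of_ssubset hYX
  classical
  refine ⟨fun x => if x ∈ Y then z₀ else y₀, ?_, ⟨y₀, ⟨x₀, hx₀, by simp [hx₀]⟩, hy₀Y, hy₀Z⟩, ?_⟩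
  · rintro _ ⟨x, hx, rfl⟩; simp [hx, hz₀]
  · intro e he hee
    have key : Set.range e ∩ (Y \ Z) = ∅ := by
      ext v
      simp only [Set.mem_inter_iff, Set.mem_range, Set.mem_diff, Set.mem_empty_iff_false,
        iff_false, not_and]
      rintro ⟨x, rfl⟩ hY hZc
      have h1 := he ⟨e x, hY, rfl⟩
      rw [show e (e x) = e x from congrFun hee x] at h1
      exact hZc h1

    refine ⟨key, fun h => ?_⟩
    have : y₀ ∈ Set.range e := h ▸ ⟨x₀, by simp [hx₀]⟩
    exact absurd key (by
      apply Set.Nonempty.ne_empty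
      exact ⟨y₀, this, hy₀Y, hy₀Z⟩)
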